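/- Let f(z) = Σ_{k≥0} a_k z^k be an entire function with real coefficients such that f(r) > 0 for all real r ≥ 0. Then for all integers k ≥ 0, ν ≥ 1 and every real η: the sign of I_k^ν(η, f) equals the sign of A_k^ν(f) (in particular I_k^ν(η, f) > 0 iff A_k^ν(f) > 0, I_k^ν(η, f) = 0 iff A_k^ν(f) = 0, and I_k^ν(η, f) < 0 iff A_k^ν(f) < 0). -/

import Mathlib

open scoped Real
open MeasureTheory

/-- The extension of a sequence `a : ℕ → ℝ` to `ℤ`, vanishing on negative indices. -/
noncomputable def toepEntry (a : ℕ → ℝ) (d : ℤ) : ℝ :=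
  if 0 ≤ d then a d.toNat else 0

/-- The determinant `A_k^ν = det(a_{k+j−l})_{l,j=0,…,ν-1}` (with `a_d = 0` for `d < 0`). -/
noncomputable def toepMinor (a : ℕ → ℝ) (k ν : ℕ) : ℝ :=
  Matrix.det (Matrix.of fun l j : Fin ν => toepEntry a ((k : ℤ) + (j : ℤ) - (l : ℤ)))

/-- The multiple integral
`I_k^ν(η, f) = ∫_{[-π,π]^ν} Re{∏_{j=1}^ν e^{-ikθ_j} f(e^{η+iθ_j})/f(e^η)}`
`· ∏_{α<β} 4 sin²((θ_α-θ_β)/2) dθ_1 ⋯ dθ_ν`. -/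
noncomputable def Iint (f : ℂ → ℂ) (k ν : ℕ) (η : ℝ) : ℝ :=
  ∫ θ : Fin ν → ℝ in Set.Icc (fun _ => -π) (fun _ => π),
    (∏ j : Fin ν, Complex.exp (-Complex.I * (k : ℂ) * (θ j : ℂ)) *
        f (Complex.exp ((η : ℂ) + Complex.I * (θ j : ℂ))) / f ((Real.exp η : ℝ) : ℂ)).re *
      ∏ p ∈ Finset.univ.filter (fun p : Fin ν × Fin ν => p.1 < p.2),
        4 * Real.sin ((θ p.1 - θ p.2) / 2) ^ 2

lemma orth (u : ℤ) : (∫ t in Set.Icc (-π) π, Complex.exp (Complex.I * u * t)) =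
    if u = 0 then ((2 * π : ℝ) : ℂ) else 0 := by
  have hle : (-π : ℝ) ≤ π := by linarith [Real.pi_pos]
  rw [MeasureTheory.integral_Icc_eq_integral_Ioc, ← intervalIntegral.integral_of_le hle]
  rcases eq_or_ne u 0 with h | h
  · simp [h, two_mul]
  · rw [if_neg h]
    have hc : (Complex.I * u) ≠ 0 := by
      simp [Complex.I_ne_zero, Complex.ext_iff]
      exact_mod_cast h
    rw [integral_exp_mul_complex hc]
    have harg : Complex.I * u * (π : ℝ) = Complex.I * u * ((-π : ℝ) : ℂ) + u * (2 * π * Complex.I) := by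
      push_cast; ring
    rw [harg, Complex.exp_add, Complex.exp_int_mul_two_pi_mul_I, mul_one, sub_self, zero_div]

lemma sign_mul_pos {c : ℝ} (hc : 0 < c) (x : ℝ) : Real.sign (c * x) = Real.sign x := by
  rcases lt_trichotomy x 0 with h | h | h
  · rw [Real.sign_of_neg h, Real.sign_of_neg (by nlinarith)]
  · simp [h]
  · rw [Real.sign_of_pos h, Real.sign_of_pos (by nlinarith)]

lemma sum_perm_det {n : ℕ} (M : Matrix (Fin n) (Fin n) ℂ) :
    ∑ σ : Equiv.Perm (Fin n), ∑ τ : Equiv.Perm (Fin n),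
      ((Equiv.Perm.sign σ : ℤ) : ℂ) * ((Equiv.Perm.sign τ : ℤ) : ℂ) * ∏ j, M (σ j) (τ j)
      = (n.factorial : ℂ) * M.det := by
  have key : ∀ σ : Equiv.Perm (Fin n),
      ∑ τ : Equiv.Perm (Fin n), ((Equiv.Perm.sign σ : ℤ) : ℂ) * ((Equiv.Perm.sign τ : ℤ) : ℂ) *
        ∏ j, M (σ j) (τ j) = M.det := by
    intro σ
    rw [← Equiv.sum_comp (Equiv.mulRight σ)]
    have step : ∀ ρ : Equiv.Perm (Fin n),
        ((Equiv.Perm.sign σ : ℤ) : ℂ) * ((Equiv.Perm.sign (Equiv.mulRight σ ρ) : ℤ) : ℂ) *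
          ∏ j, M (σ j) ((Equiv.mulRight σ ρ) j) =
        ((Equiv.Perm.sign ρ : ℤ) : ℂ) * ∏ i, Matrix.transpose M (ρ i) i := by
      intro ρ
      have h1 : ((Equiv.Perm.sign σ : ℤ) : ℂ) * ((Equiv.Perm.sign (Equiv.mulRight σ ρ) : ℤ) : ℂ)
          = ((Equiv.Perm.sign ρ : ℤ) : ℂ) := by
        have e1 : (Equiv.Perm.sign (Equiv.mulRight σ ρ) : ℤ)
            = (Equiv.Perm.sign ρ : ℤ) * (Equiv.Perm.sign σ : ℤ) := by
          rw [show Equiv.mulRight σ ρ = ρ * σ from rfl, Equiv.Perm.sign_mul, Units.val_mul]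
        rw [e1]
        have hsq : ((Equiv.Perm.sign σ : ℤ) : ℂ) * ((Equiv.Perm.sign σ : ℤ) : ℂ) = 1 := by
          have h := Int.units_mul_self (Equiv.Perm.sign σ)
          have h2 : (Equiv.Perm.sign σ : ℤ) * (Equiv.Perm.sign σ : ℤ) = 1 := by
            rw [← Units.val_mul, h]; rfl
          exact_mod_cast h2
        push_cast
        linear_combination ((Equiv.Perm.sign ρ : ℤ) : ℂ) * hsq
      have h2 : (∏ j, M (σ j) ((Equiv.mulRight σ ρ) j)) = ∏ i, Matrix.transpose M (ρ i) i := by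
        simp only [Equiv.coe_mulRight, Equiv.Perm.coe_mul, Function.comp_apply,
          Matrix.transpose_apply]
        exact Equiv.prod_comp σ (fun i => M i (ρ i))
      rw [h1, h2]
    rw [Finset.sum_congr rfl fun ρ _ => step ρ, ← Matrix.det_apply', Matrix.det_transpose]
  rw [Finset.sum_congr rfl fun σ _ => key σ, Finset.sum_const, Finset.card_univ,
    Fintype.card_perm, Fintype.card_fin, nsmul_eq_mul]

lemma vand_pair (α β : ℝ) :
    ((4 * Real.sin ((α - β) / 2) ^ 2 : ℝ) : ℂ) =
      (Complex.exp (Complex.I * β) - Complex.exp (Complex.I * α)) *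
        (Complex.exp (-(Complex.I * β)) - Complex.exp (-(Complex.I * α))) := by
  have hp : Complex.exp (Complex.I * α / 2) ≠ 0 := Complex.exp_ne_zero _
  have hq : Complex.exp (Complex.I * β / 2) ≠ 0 := Complex.exp_ne_zero _
  set p := Complex.exp (Complex.I * α / 2) with hpdef
  set q := Complex.exp (Complex.I * β / 2) with hqdef
  have e1 : Complex.exp (-(((α : ℂ) - β) / 2) * Complex.I) = q / p := by
    rw [hqdef, hpdef, ← Complex.exp_sub]; congr 1; ring
  have e2 : Complex.exp ((((α : ℂ) - β) / 2) * Complex.I) = p / q := by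
    rw [hqdef, hpdef, ← Complex.exp_sub]; congr 1; ring
  have e3 : Complex.exp (Complex.I * β) = q * q := by
    rw [hqdef, ← Complex.exp_add]; congr 1; ring
  have e4 : Complex.exp (Complex.I * α) = p * p := by
    rw [hpdef, ← Complex.exp_add]; congr 1; ring
  have e5 : Complex.exp (-(Complex.I * β)) = (q * q)⁻¹ := by
    rw [← e3, Complex.exp_neg]
  have e6 : Complex.exp (-(Complex.I * α)) = (p * p)⁻¹ := by
    rw [← e4, Complex.exp_neg]
  push_cast [Complex.ofReal_sin]
  rw [Complex.sin, show (((α : ℂ) - β) / 2 : ℂ) = (((α : ℂ) - β) / 2) from rfl]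
  rw [e1, e2, e3, e4, e5, e6]
  have hI : Complex.I ^ 2 = -1 := Complex.I_sq
  field_simp
  ring_nf
  linear_combination (-8 * q ^ 2 * p ^ 2 + 4 * q ^ 4 + 4 * p ^ 4) * hI

lemma prod_pairs {M : Type*} [CommMonoid M] (ν : ℕ) (g : Fin ν → Fin ν → M) :
    ∏ p ∈ Finset.univ.filter (fun p : Fin ν × Fin ν => p.1 < p.2), g p.1 p.2
      = ∏ i, ∏ j ∈ Finset.Ioi i, g i j := by
  rw [Finset.prod_filter, Fintype.prod_prod_type]
  refine Finset.prod_congr rfl fun i _ => ?_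
  rw [← Finset.prod_filter, Finset.filter_lt_eq_Ioi]

lemma vand_expand (ν : ℕ) (θ : Fin ν → ℝ) :
    ((∏ p ∈ Finset.univ.filter (fun p : Fin ν × Fin ν => p.1 < p.2),
        4 * Real.sin ((θ p.1 - θ p.2) / 2) ^ 2 : ℝ) : ℂ) =
      ∑ σ : Equiv.Perm (Fin ν), ∑ τ : Equiv.Perm (Fin ν),
        ((Equiv.Perm.sign σ : ℤ) : ℂ) * ((Equiv.Perm.sign τ : ℤ) : ℂ) *
          ∏ j, (Complex.exp (Complex.I * ((σ j : ℕ) : ℂ) * θ j) *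
                Complex.exp (-(Complex.I * ((τ j : ℕ) : ℂ) * θ j))) := by
  have hx : ∀ j : Fin ν, Complex.exp (Complex.I * θ j) ≠ 0 := fun _ => Complex.exp_ne_zero _
  rw [Complex.ofReal_prod]
  calc (∏ p ∈ Finset.univ.filter (fun p : Fin ν × Fin ν => p.1 < p.2),
        ((4 * Real.sin ((θ p.1 - θ p.2) / 2) ^ 2 : ℝ) : ℂ))
      = ∏ p ∈ Finset.univ.filter (fun p : Fin ν × Fin ν => p.1 < p.2),
          ((Complex.exp (Complex.I * θ p.2) - Complex.exp (Complex.I * θ p.1)) *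
           (Complex.exp (-(Complex.I * θ p.2)) - Complex.exp (-(Complex.I * θ p.1)))) := by
        refine Finset.prod_congr rfl fun p _ => ?_
        exact vand_pair (θ p.1) (θ p.2)
    _ = (∏ p ∈ Finset.univ.filter (fun p : Fin ν × Fin ν => p.1 < p.2),
          (Complex.exp (Complex.I * θ p.2) - Complex.exp (Complex.I * θ p.1))) *
        (∏ p ∈ Finset.univ.filter (fun p : Fin ν × Fin ν => p.1 < p.2),
          (Complex.exp (-(Complex.I * θ p.2)) - Complex.exp (-(Complex.I * θ p.1)))) := by
        rw [Finset.prod_mul_distrib]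
    _ = (Matrix.vandermonde (fun j => Complex.exp (Complex.I * θ j))).det *
        (Matrix.vandermonde (fun j => Complex.exp (-(Complex.I * θ j)))).det := by
        rw [Matrix.det_vandermonde, Matrix.det_vandermonde,
          prod_pairs ν (fun i j => Complex.exp (Complex.I * θ j) - Complex.exp (Complex.I * θ i)),
          prod_pairs ν (fun i j => Complex.exp (-(Complex.I * θ j)) - Complex.exp (-(Complex.I * θ i)))]
    _ = _ := by
        rw [← Matrix.det_transpose (Matrix.vandermonde fun j => Complex.exp (Complex.I * θ j)),
          ← Matrix.det_transpose (Matrix.vandermonde fun j => Complex.exp (-(Complex.I * θ j))),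
          Matrix.det_apply', Matrix.det_apply', Finset.sum_mul_sum]
        refine Finset.sum_congr rfl fun σ _ => Finset.sum_congr rfl fun τ _ => ?_
        simp only [Matrix.transpose_apply, Matrix.vandermonde_apply]
        rw [Finset.prod_mul_distrib]
        have h1 : ∀ j : Fin ν, Complex.exp (Complex.I * θ j) ^ ((σ j : ℕ)) =
            Complex.exp (Complex.I * ((σ j : ℕ) : ℂ) * θ j) := by
          intro j; rw [← Complex.exp_nat_mul]; congr 1; ring
        have h2 : ∀ j : Fin ν, Complex.exp (-(Complex.I * θ j)) ^ ((τ j : ℕ)) =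
            Complex.exp (-(Complex.I * ((τ j : ℕ) : ℂ) * θ j)) := by
          intro j; rw [← Complex.exp_nat_mul]; congr 1; ring
        simp_rw [h1, h2]
        rw [← Finset.prod_mul_distrib]
        ring_nf
        rw [Finset.prod_mul_distrib]
        ring
        congr 1
        exact Finset.prod_congr rfl fun x _ => by congr 1; ring

lemma summable_coeff {f : ℂ → ℂ} {a : ℕ → ℝ}
    (ha : ∀ z : ℂ, f z = ∑' k : ℕ, (a k : ℂ) * z ^ k)
    (hpos : ∀ r : ℝ, 0 ≤ r → 0 < (f (r : ℂ)).re ∧ (f (r : ℂ)).im = 0)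
    (R : ℝ) (hR : 0 ≤ R) : Summable fun m : ℕ => |a m| * R ^ m := by
  have h2R : (0:ℝ) < 2 * R + 1 := by linarith
  have hs : Summable fun m : ℕ => ((a m : ℂ) * ((2*R+1 : ℝ) : ℂ) ^ m) := by
    by_contra h
    have h0 := tsum_eq_zero_of_not_summable h
    have hfz := ha ((2*R+1 : ℝ) : ℂ)
    rw [h0] at hfz
    have hp := (hpos (2*R+1) h2R.le).1
    rw [hfz] at hp; simp at hp
  obtain ⟨C, hC⟩ := (hs.tendsto_atTop_zero.norm.bddAbove_range)
  simp only [mem_upperBounds, Set.mem_range, forall_exists_index] at hC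
  have hCb : ∀ m : ℕ, |a m| * (2*R+1) ^ m ≤ C := by
    intro m
    have h2 : ‖(a m : ℂ) * ((2*R+1 : ℝ) : ℂ) ^ m‖ = |a m| * (2*R+1) ^ m := by
      rw [norm_mul, norm_pow, Complex.norm_real, Complex.norm_real, Real.norm_eq_abs,
        Real.norm_eq_abs, abs_of_nonneg h2R.le]
    have := hC _ m rfl
    rwa [h2] at this
  have hratio : R / (2*R+1) < 1 := by
    rw [div_lt_one h2R]; linarith
  have hr0 : (0:ℝ) ≤ R / (2*R+1) := div_nonneg hR h2R.le
  refine Summable.of_nonneg_of_le (fun m => by positivity)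
    (fun m => ?_) (((summable_geometric_of_lt_one hr0 hratio)).mul_left C)
  have hRe : R ^ m = (2*R+1) ^ m * (R / (2*R+1)) ^ m := by
    rw [← mul_pow]; congr 1; field_simp
  calc |a m| * R ^ m = (|a m| * (2*R+1) ^ m) * (R / (2*R+1)) ^ m := by rw [hRe]; ring
    _ ≤ C * (R / (2*R+1)) ^ m := by
        apply mul_le_mul_of_nonneg_right (hCb m) (by positivity)

lemma fourier_coeff {f : ℂ → ℂ} (hf : Differentiable ℂ f) {a : ℕ → ℝ}
    (ha : ∀ z : ℂ, f z = ∑' k : ℕ, (a k : ℂ) * z ^ k)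
    (hpos : ∀ r : ℝ, 0 ≤ r → 0 < (f (r : ℂ)).re ∧ (f (r : ℂ)).im = 0)
    (η : ℝ) (w : ℤ) :
    (∫ t in Set.Icc (-π) π, Complex.exp (Complex.I * w * t) * f (Complex.exp (η + Complex.I * t)))
      = ((2 * π : ℝ) : ℂ) * ((toepEntry a (-w) : ℝ) : ℂ) *
        ((Real.exp η) ^ (-w).toNat : ℝ) := by
  have hsum : Summable fun m : ℕ => |a m| * (Real.exp η) ^ m :=
    summable_coeff ha hpos _ (Real.exp_pos η).le
  set F : ℕ → ℝ → ℂ := fun m t =>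
    Complex.exp (Complex.I * w * t) * ((a m : ℂ) * ((Real.exp η : ℝ) : ℂ) ^ m *
      Complex.exp (Complex.I * m * t)) with hF
  have hfeq : ∀ t : ℝ, Complex.exp (Complex.I * w * t) * f (Complex.exp (η + Complex.I * t))
      = ∑' m, F m t := by
    intro t
    rw [ha (Complex.exp (η + Complex.I * t)), ← tsum_mul_left]
    congr 1; funext m
    rw [hF]
    have : Complex.exp ((η : ℂ) + Complex.I * t) ^ m
        = ((Real.exp η : ℝ) : ℂ) ^ m * Complex.exp (Complex.I * m * t) := by
      rw [← Complex.exp_nat_mul, Complex.ofReal_exp, ← Complex.exp_nat_mul, ← Complex.exp_add]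
      congr 1; ring
    rw [this]; ring
  have hnorm : ∀ m t, ‖F m t‖ = |a m| * (Real.exp η) ^ m := by
    intro m t
    rw [hF]
    simp [Complex.norm_exp, abs_of_nonneg (Real.exp_pos η).le, Complex.norm_real]
  have hint : ∀ m : ℕ, IntegrableOn (F m) (Set.Icc (-π) π) := by
    intro m
    apply Continuous.integrableOn_Icc
    continuity
  have hswap : (∫ t in Set.Icc (-π) π, ∑' m, F m t) = ∑' m, ∫ t in Set.Icc (-π) π, F m t := by
    refine (MeasureTheory.integral_tsum_of_summable_integral_norm hint ?_).symm
    have : ∀ m : ℕ, (∫ t in Set.Icc (-π) π, ‖F m t‖) = (|a m| * (Real.exp η) ^ m) * (2 * π) := by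
      intro m
      simp_rw [hnorm m]
      rw [MeasureTheory.setIntegral_const, measureReal_def, Real.volume_Icc, smul_eq_mul]
      rw [ENNReal.toReal_ofReal (by linarith [Real.pi_pos])]
      ring
    simp_rw [this]
    exact hsum.mul_right _
  have hterm : ∀ m : ℕ, (∫ t in Set.Icc (-π) π, F m t)
      = (a m : ℂ) * ((Real.exp η : ℝ) : ℂ) ^ m * (if (m : ℤ) + w = 0 then ((2*π : ℝ) : ℂ) else 0) := by
    intro m
    have : ∀ t : ℝ, F m t = (a m : ℂ) * ((Real.exp η : ℝ) : ℂ) ^ m *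
        Complex.exp (Complex.I * ((m : ℤ) + w : ℤ) * t) := by
      intro t
      simp only [hF]
      rw [show Complex.exp (Complex.I*w*t) * ((a m : ℂ) * ((Real.exp η : ℝ):ℂ)^m *
            Complex.exp (Complex.I*m*t)) = (a m : ℂ) * ((Real.exp η : ℝ):ℂ)^m *
            (Complex.exp (Complex.I*w*t) * Complex.exp (Complex.I*m*t)) from by ring,
        ← Complex.exp_add]
      congr 2
      push_cast; ring
    simp_rw [this]
    rw [MeasureTheory.integral_const_mul, orth ((m : ℤ) + w)]
  simp_rw [hfeq, hswap, hterm]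
  rcases le_or_gt w 0 with hw | hw
  · have hm0 : ((-w).toNat : ℤ) = -w := Int.toNat_of_nonneg (by omega)
    rw [tsum_eq_single (-w).toNat]
    · rw [if_pos (by omega), toepEntry, if_pos (by omega)]
      push_cast
      ring
    · intro m hm
      rw [if_neg (by omega), mul_zero]
  · have : ∀ m : ℕ, (a m : ℂ) * ((Real.exp η : ℝ) : ℂ) ^ m *
        (if (m : ℤ) + w = 0 then ((2*π : ℝ) : ℂ) else 0) = 0 := by
      intro m; rw [if_neg (by omega), mul_zero]
    rw [tsum_congr this, tsum_zero, toepEntry, if_neg (by omega)]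
    simp

lemma entry_exp (a : ℕ → ℝ) (η : ℝ) (w : ℤ) :
    (toepEntry a w) * Real.exp η ^ w.toNat = toepEntry a w * Real.exp ((w : ℝ) * η) := by
  by_cases h : 0 ≤ w
  · congr 1
    rw [← Real.exp_nat_mul]
    congr 1
    have hh : ((w.toNat : ℤ) : ℝ) = (w : ℝ) := by exact_mod_cast congrArg (fun z : ℤ => (z : ℝ)) (Int.toNat_of_nonneg h)
    push_cast at hh
    rw [hh]
  · simp [toepEntry, if_neg h]

/-- Let `f(z) = Σ_{k≥0} a_k z^k` be entire with real coefficients and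
`f(r) > 0` for all real `r ≥ 0`.  Then for all `k ≥ 0`, `ν ≥ 1` and every real `η`, the
sign of `I_k^ν(η, f)` equals the sign of `A_k^ν(f)`. -/
theorem sign_Iint_eq_sign_toepMinor (f : ℂ → ℂ) (hf : Differentiable ℂ f)
    (a : ℕ → ℝ) (ha : ∀ z : ℂ, f z = ∑' k : ℕ, (a k : ℂ) * z ^ k)
    (hpos : ∀ r : ℝ, 0 ≤ r → 0 < (f (r : ℂ)).re ∧ (f (r : ℂ)).im = 0)
    (k ν : ℕ) (hν : 1 ≤ ν) (η : ℝ) :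
    Real.sign (Iint f k ν η) = Real.sign (toepMinor a k ν) := by
  classical
  set F0 : ℂ := f ((Real.exp η : ℝ) : ℂ) with hF0def
  set c : ℝ := F0.re with hcdef
  have hc : 0 < c := (hpos _ (Real.exp_pos η).le).1
  have hF0 : F0 = ((c : ℝ) : ℂ) :=
    Complex.ext (by rw [Complex.ofReal_re]) (by rw [Complex.ofReal_im]; exact (hpos _ (Real.exp_pos η).le).2)
  have hF0ne : F0 ≠ 0 := by
    rw [hF0]
    exact Complex.ofReal_ne_zero.mpr hc.ne'
  -- basic objects
  set B : Set (Fin ν → ℝ) := Set.Icc (fun _ => -π) (fun _ => π) with hBdef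
  have hBm : MeasurableSet B := measurableSet_Icc
  have hBmem : ∀ θ : Fin ν → ℝ, θ ∈ B ↔ ∀ j, θ j ∈ Set.Icc (-π) π := by
    intro θ
    simp [hBdef, Set.mem_Icc, Pi.le_def, forall_and]
  set V : (Fin ν → ℝ) → ℝ := fun θ =>
    ∏ p ∈ Finset.univ.filter (fun p : Fin ν × Fin ν => p.1 < p.2),
      4 * Real.sin ((θ p.1 - θ p.2) / 2) ^ 2 with hVdef
  set P : (Fin ν → ℝ) → ℂ := fun θ =>
    ∏ j : Fin ν, Complex.exp (-Complex.I * (k : ℂ) * (θ j : ℂ)) *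
      f (Complex.exp ((η : ℂ) + Complex.I * (θ j : ℂ))) / F0 with hPdef
  set G : (Fin ν → ℝ) → ℂ := fun θ => P θ * ((V θ : ℝ) : ℂ) with hGdef
  -- continuity
  have hexp1 : ∀ z : ℂ, Continuous fun t : ℝ => Complex.exp (z * (t : ℝ)) := fun z =>
    Complex.continuous_exp.comp (continuous_const.mul Complex.continuous_ofReal)
  have hexp2 : ∀ z : ℂ, Continuous fun t : ℝ => Complex.exp (-(z * (t : ℝ))) := fun z =>
    Complex.continuous_exp.comp (continuous_const.mul Complex.continuous_ofReal).neg
  have hgf : Continuous fun t : ℝ => f (Complex.exp ((η : ℂ) + Complex.I * (t : ℝ))) :=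
    hf.continuous.comp (Complex.continuous_exp.comp
      (continuous_const.add (continuous_const.mul Complex.continuous_ofReal)))
  have hPcont : Continuous P := by
    apply continuous_finset_prod
    intro j _
    apply Continuous.div_const
    apply Continuous.mul
    · exact (hexp1 (-Complex.I * (k : ℂ))).comp (continuous_apply j)
    · exact hgf.comp (continuous_apply j)
  have hVcont : Continuous V := by
    apply continuous_finset_prod
    intro p _
    exact continuous_const.mul ((Real.continuous_sin.comp
      (((continuous_apply p.1).sub (continuous_apply p.2)).div_const 2)).pow 2)
  have hGcont : Continuous G := hPcont.mul (Complex.continuous_ofReal.comp hVcont)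
  have hGint : IntegrableOn G B := hGcont.continuousOn.integrableOn_compact isCompact_Icc
  -- step A: Iint = (∫ G).re
  have hre : ∫ θ in B, (G θ).re = (∫ θ in B, G θ).re := by
    simpa using Complex.reCLM.integral_comp_comm hGint
  have stepA : Iint f k ν η = (∫ θ in B, G θ).re := by
    rw [Iint, ← hre]
    refine MeasureTheory.setIntegral_congr_fun hBm fun θ _ => ?_
    simp only [hGdef, hPdef, hVdef, hF0def]
    rw [Complex.mul_re, Complex.ofReal_re, Complex.ofReal_im]
    ring
  -- the one-variable factors
  set g : Equiv.Perm (Fin ν) → Equiv.Perm (Fin ν) → Fin ν → ℝ → ℂ := fun σ τ j t =>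
    Complex.exp (-Complex.I * (k : ℂ) * (t : ℝ)) * f (Complex.exp ((η : ℂ) + Complex.I * (t : ℝ))) / F0 *
      (Complex.exp (Complex.I * ((σ j : ℕ) : ℂ) * t) *
       Complex.exp (-(Complex.I * ((τ j : ℕ) : ℂ) * t))) with hgdef
  have hgcont : ∀ σ τ j, Continuous (g σ τ j) := by
    intro σ τ j
    apply Continuous.mul
    · apply Continuous.div_const
      exact (hexp1 (-Complex.I * (k : ℂ))).mul hgf
    · exact (hexp1 _).mul (hexp2 _)
  -- step B : expand G pointwise
  have stepB : ∀ θ, G θ = ∑ σ : Equiv.Perm (Fin ν), ∑ τ : Equiv.Perm (Fin ν),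
      ((Equiv.Perm.sign σ : ℤ) : ℂ) * ((Equiv.Perm.sign τ : ℤ) : ℂ) * ∏ j, g σ τ j (θ j) := by
    intro θ
    rw [hGdef]
    simp only
    rw [hVdef]
    simp only
    rw [vand_expand ν θ, Finset.mul_sum]
    refine Finset.sum_congr rfl fun σ _ => ?_
    rw [Finset.mul_sum]
    refine Finset.sum_congr rfl fun τ _ => ?_
    rw [hPdef, hgdef]
    simp only
    simp only [div_eq_mul_inv, Finset.prod_mul_distrib]
    ring
  -- step C : integrate term by term
  have hTint : ∀ σ τ : Equiv.Perm (Fin ν), IntegrableOn (fun θ =>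
      ((Equiv.Perm.sign σ : ℤ) : ℂ) * ((Equiv.Perm.sign τ : ℤ) : ℂ) * ∏ j, g σ τ j (θ j)) B := by
    intro σ τ
    apply ContinuousOn.integrableOn_compact isCompact_Icc
    apply Continuous.continuousOn
    apply Continuous.mul continuous_const
    exact continuous_finset_prod _ fun j _ => (hgcont σ τ j).comp (continuous_apply j)
  have stepC : (∫ θ in B, G θ) = ∑ σ : Equiv.Perm (Fin ν), ∑ τ : Equiv.Perm (Fin ν),
      ((Equiv.Perm.sign σ : ℤ) : ℂ) * ((Equiv.Perm.sign τ : ℤ) : ℂ) *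
        ∫ θ in B, ∏ j, g σ τ j (θ j) := by
    rw [MeasureTheory.setIntegral_congr_fun hBm fun θ _ => stepB θ]
    rw [MeasureTheory.integral_finset_sum _ (fun σ _ => by
      apply MeasureTheory.integrable_finset_sum _ (fun τ _ => hTint σ τ))]
    refine Finset.sum_congr rfl fun σ _ => ?_
    rw [MeasureTheory.integral_finset_sum _ (fun τ _ => hTint σ τ)]
    refine Finset.sum_congr rfl fun τ _ => ?_
    rw [MeasureTheory.integral_const_mul]
  -- step D : factor the box integral into one-dimensional ones
  have stepD : ∀ σ τ : Equiv.Perm (Fin ν), (∫ θ in B, ∏ j, g σ τ j (θ j))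
      = ∏ j, ∫ t in Set.Icc (-π) π, g σ τ j t := by
    intro σ τ
    rw [← MeasureTheory.integral_indicator hBm]
    have hind : B.indicator (fun θ => ∏ j, g σ τ j (θ j))
        = fun θ => ∏ j, (Set.Icc (-π) π).indicator (g σ τ j) (θ j) := by
      funext θ
      by_cases hθ : θ ∈ B
      · rw [Set.indicator_of_mem hθ]
        exact (Finset.prod_congr rfl fun j _ =>
          Set.indicator_of_mem ((hBmem θ).1 hθ j) (g σ τ j)).symm
      · rw [Set.indicator_of_notMem hθ]
        obtain ⟨j, hj⟩ := not_forall.1 (fun h => hθ ((hBmem θ).2 h))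
        exact (Finset.prod_eq_zero (Finset.mem_univ j)
          (Set.indicator_of_notMem hj (g σ τ j))).symm
    rw [hind]
    beta_reduce
    rw [MeasureTheory.volume_pi, MeasureTheory.integral_fintype_prod_eq_prod
      (f := fun j => (Set.Icc (-π) π).indicator (g σ τ j))]
    exact Finset.prod_congr rfl fun j _ => MeasureTheory.integral_indicator measurableSet_Icc
  -- step E : evaluate each one-dimensional integral
  have stepE : ∀ (σ τ : Equiv.Perm (Fin ν)) (j : Fin ν),
      (∫ t in Set.Icc (-π) π, g σ τ j t)
        = (((2 * π : ℝ) : ℂ) / F0) * ((toepEntry a ((k : ℤ) + (τ j : ℕ) - (σ j : ℕ)) : ℝ) : ℂ) *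
            ((Real.exp ((((k : ℤ) + (τ j : ℕ) - (σ j : ℕ) : ℤ) : ℝ) * η) : ℝ) : ℂ) := by
    intro σ τ j
    set w : ℤ := ((σ j : ℕ) : ℤ) - ((τ j : ℕ) : ℤ) - (k : ℤ) with hwdef
    have hg2 : ∀ t : ℝ, g σ τ j t =
        (1 / F0) * (Complex.exp (Complex.I * (w : ℂ) * t) * f (Complex.exp ((η : ℂ) + Complex.I * t))) := by
      intro t
      rw [hgdef]
      simp only
      rw [show Complex.I * (w : ℂ) * t = (-Complex.I * (k : ℂ) * t) +
          (Complex.I * ((σ j : ℕ) : ℂ) * t + -(Complex.I * ((τ j : ℕ) : ℂ) * t)) by push_cast [hwdef]; ring]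
      rw [Complex.exp_add, Complex.exp_add]
      ring_nf
      simp only [Complex.exp_sub, Complex.exp_neg]
      ring
    simp_rw [hg2]
    rw [MeasureTheory.integral_const_mul, fourier_coeff hf ha hpos η w]
    have hnw : -w = (k : ℤ) + (τ j : ℕ) - (σ j : ℕ) := by rw [hwdef]; ring
    have key : ((toepEntry a (-w) : ℝ) : ℂ) * ((Real.exp η ^ (-w).toNat : ℝ) : ℂ)
        = ((toepEntry a ((k : ℤ) + (τ j : ℕ) - (σ j : ℕ)) : ℝ) : ℂ) *
          ((Real.exp ((((k : ℤ) + (τ j : ℕ) - (σ j : ℕ) : ℤ) : ℝ) * η) : ℝ) : ℂ) := by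
      rw [← Complex.ofReal_mul, ← Complex.ofReal_mul, hnw]
      exact congrArg (fun x : ℝ => (x : ℂ)) (entry_exp a η ((k : ℤ) + (τ j : ℕ) - (σ j : ℕ)))
    linear_combination (((2 * π : ℝ) : ℂ) / F0) * key
  -- assemble
  set M : Matrix (Fin ν) (Fin ν) ℂ := Matrix.of fun l j' : Fin ν =>
    ((toepEntry a ((k : ℤ) + (j' : ℤ) - (l : ℤ)) : ℝ) : ℂ) with hMdef
  have hdet : M.det = ((toepMinor a k ν : ℝ) : ℂ) := by
    have h0 := RingHom.map_det Complex.ofRealHom (Matrix.of fun l j : Fin ν =>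
      toepEntry a ((k : ℤ) + (j : ℤ) - (l : ℤ)))
    rw [toepMinor]
    have hMeq : M = Complex.ofRealHom.mapMatrix (Matrix.of fun l j : Fin ν =>
        toepEntry a ((k : ℤ) + (j : ℤ) - (l : ℤ))) := by
      ext l j; rfl
    rw [hMeq, ← h0]; rfl
  have hEprod : ∀ σ τ : Equiv.Perm (Fin ν),
      (∏ j, ((Real.exp ((((k : ℤ) + (τ j : ℕ) - (σ j : ℕ) : ℤ) : ℝ) * η) : ℝ) : ℂ))
        = ((Real.exp ((k * ν : ℝ) * η) : ℝ) : ℂ) := by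
    intro σ τ
    rw [← Complex.ofReal_prod, ← Real.exp_sum]
    congr 2
    have hτ : ∑ j, ((τ j : ℕ) : ℝ) = ∑ j : Fin ν, ((j : ℕ) : ℝ) := by
      simpa using Equiv.sum_comp τ (fun i : Fin ν => ((i : ℕ) : ℝ))
    have hσ : ∑ j, ((σ j : ℕ) : ℝ) = ∑ j : Fin ν, ((j : ℕ) : ℝ) := by
      simpa using Equiv.sum_comp σ (fun i : Fin ν => ((i : ℕ) : ℝ))
    have : ∀ j : Fin ν, ((((k : ℤ) + (τ j : ℕ) - (σ j : ℕ) : ℤ) : ℝ) * η)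
        = ((k : ℝ) + ((τ j : ℕ) : ℝ) - ((σ j : ℕ) : ℝ)) * η := by
      intro j; push_cast; ring
    rw [Finset.sum_congr rfl fun j _ => this j, ← Finset.sum_mul]
    rw [show (∑ j, ((k : ℝ) + ((τ j : ℕ) : ℝ) - ((σ j : ℕ) : ℝ)))
        = (∑ _j : Fin ν, (k : ℝ)) + (∑ j, ((τ j : ℕ) : ℝ)) - (∑ j, ((σ j : ℕ) : ℝ)) by
      rw [← Finset.sum_add_distrib, ← Finset.sum_sub_distrib]]
    rw [hτ, hσ, Finset.sum_const, Finset.card_univ, Fintype.card_fin, nsmul_eq_mul]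
    ring
  have hterm : ∀ σ τ : Equiv.Perm (Fin ν),
      (∏ j, (((2 * π : ℝ) : ℂ) / F0) * ((toepEntry a ((k : ℤ) + (τ j : ℕ) - (σ j : ℕ)) : ℝ) : ℂ) *
          ((Real.exp ((((k : ℤ) + (τ j : ℕ) - (σ j : ℕ) : ℤ) : ℝ) * η) : ℝ) : ℂ))
        = ((((2 * π : ℝ) : ℂ) / F0) ^ ν * ((Real.exp ((k * ν : ℝ) * η) : ℝ) : ℂ)) *
            ∏ j, M (σ j) (τ j) := by
    intro σ τ
    rw [Finset.prod_mul_distrib, Finset.prod_mul_distrib, Finset.prod_const, hEprod σ τ,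
      Finset.card_univ, Fintype.card_fin]
    have : ∀ j : Fin ν, M (σ j) (τ j)
        = ((toepEntry a ((k : ℤ) + (τ j : ℕ) - (σ j : ℕ)) : ℝ) : ℂ) := by
      intro j
      simp only [hMdef, Matrix.of_apply]
    rw [Finset.prod_congr rfl fun j _ => this j]
    ring
  set C1 : ℂ := (((2 * π : ℝ) : ℂ) / F0) ^ ν * ((Real.exp ((k * ν : ℝ) * η) : ℝ) : ℂ) with hC1def
  have hsum2 : (∫ θ in B, G θ) = C1 * ((ν.factorial : ℂ) * M.det) := by
    rw [stepC, ← sum_perm_det M, Finset.mul_sum]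
    refine Finset.sum_congr rfl fun σ _ => ?_
    rw [Finset.mul_sum]
    refine Finset.sum_congr rfl fun τ _ => ?_
    rw [stepD σ τ, Finset.prod_congr rfl fun j _ => stepE σ τ j, hterm σ τ]
    ring
  have hC2 : (0:ℝ) < (2 * π / c) ^ ν * Real.exp ((k * ν : ℝ) * η) * ν.factorial :=
    mul_pos (mul_pos (pow_pos (div_pos (by linarith [Real.pi_pos]) hc) ν) (Real.exp_pos _))
      (by exact_mod_cast Nat.factorial_pos ν)
  have hIv : Iint f k ν η
      = ((2 * π / c) ^ ν * Real.exp ((k * ν : ℝ) * η) * ν.factorial) * toepMinor a k ν := by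
    rw [stepA, hsum2, hdet, hC1def, hF0]
    rw [show ((2 * π : ℝ) : ℂ) / ((c : ℝ) : ℂ) = ((2 * π / c : ℝ) : ℂ) from
      (Complex.ofReal_div _ _).symm]
    rw [← Complex.ofReal_pow, ← Complex.ofReal_natCast ν.factorial, ← Complex.ofReal_mul,
      ← Complex.ofReal_mul, ← Complex.ofReal_mul]
    rw [Complex.ofReal_re]
    ring
  rw [hIv, sign_mul_pos hC2]
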